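/- Fix λ > 0, r > 0, and set c = e^{λr} - e^{-λr}. For each fixed nonnegative integer k, n·C(n-1,k)·∫_r^∞ (c e^{-λx})^k (1 - c e^{-λx})^{n-k-1} λ e^{-λx} dx → 1/c as n → ∞. (That is, the expected number of nodes of degree k in the exponential random geometric graph, ignoring nodes in [0,r), converges to 1/c, independently of k.) -/

import Mathlib

open MeasureTheory ProbabilityTheory Real Filter Topology intervalIntegral

/-- Beta integral with natural exponents. -/
lemma beta_nat_integral (k m : ℕ) :
    ∫ x in (0:ℝ)..1, x ^ k * (1 - x) ^ m
      = (k.factorial * m.factorial : ℝ) / (k + m + 1).factorial := by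
  induction k generalizing m with
  | zero =>
      simp only [pow_zero, one_mul]
      rw [show (fun x : ℝ => (1 - x) ^ m) = (fun x : ℝ => ((fun t : ℝ => t ^ m) (1 - x))) from rfl,
        intervalIntegral.integral_comp_sub_left (fun t : ℝ => t ^ m) 1]
      simp [integral_pow, Nat.factorial_succ]
      have h1 : ((1:ℝ)+m) ≠ 0 := by positivity
      have h2 : ((m:ℝ)*m.factorial+m.factorial) ≠ 0 := by positivity
      field_simp
  | succ k ih =>
      have hparts :
          ∫ x in (0:ℝ)..1, x ^ (k+1) * (1 - x) ^ m
            = ((k+1 : ℝ) / (m+1 : ℝ)) * ∫ x in (0:ℝ)..1, x ^ k * (1 - x) ^ (m+1) := by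
        have hu : ∀ x ∈ Set.uIcc (0:ℝ) 1,
            HasDerivAt (fun t : ℝ => t ^ (k+1)) ((k+1 : ℝ) * x ^ k) x := by
          intro x _
          simpa using (hasDerivAt_pow (k+1) x)
        have hv : ∀ x ∈ Set.uIcc (0:ℝ) 1,
            HasDerivAt (fun t : ℝ => -(1 - t) ^ (m+1) / (m+1 : ℝ)) ((1 - x) ^ m) x := by
          intro x _
          have h1 : HasDerivAt (fun t : ℝ => (1 - t)) (-1) x := by
            simpa using (hasDerivAt_id x).const_sub 1
          have h2 : HasDerivAt (fun t : ℝ => (1 - t) ^ (m+1))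
              (((m+1 : ℕ) : ℝ) * (1 - x) ^ m * (-1)) x :=
            (hasDerivAt_pow (m+1) (1 - x)).comp x h1
          have h3 := (h2.neg).div_const ((m:ℝ)+1)
          refine h3.congr_deriv ?_
          have hm : ((1:ℝ)+m) ≠ 0 := by positivity
          push_cast
          field_simp
        have hu' : IntervalIntegrable (fun x : ℝ => (k+1 : ℝ) * x ^ k) volume 0 1 :=
          (Continuous.intervalIntegrable (by continuity) _ _)
        have hv' : IntervalIntegrable (fun x : ℝ => (1 - x) ^ m) volume 0 1 :=
          (Continuous.intervalIntegrable (by continuity) _ _)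
        have := intervalIntegral.integral_mul_deriv_eq_deriv_mul hu hv hu' hv'
        rw [this]
        have hm : ((m:ℝ)+1) ≠ 0 := by positivity
        have h4 : ∫ x in (0:ℝ)..1, (k+1 : ℝ) * x ^ k * (-(1 - x) ^ (m+1) / (m+1 : ℝ))
            = (-((k+1 : ℝ) / (m+1:ℝ))) * ∫ x in (0:ℝ)..1, x ^ k * (1 - x) ^ (m+1) := by
          rw [← intervalIntegral.integral_const_mul]
          congr 1
          ext x
          field_simp
        rw [h4]
        simp
      rw [hparts, ih (m+1)]
      have h1 : ((m:ℝ)+1) ≠ 0 := by positivity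
      have h2 : ((k + (m+1) + 1).factorial : ℝ) ≠ 0 := by positivity
      have h3 : ((k + 1 + m + 1).factorial : ℝ) ≠ 0 := by positivity
      have he : (k + 1 + m + 1) = (k + (m+1) + 1) := by omega
      rw [he]
      rw [Nat.factorial_succ k, Nat.factorial_succ m]
      push_cast
      field_simp

/-- Key identity: the improper integral reduces to a truncated beta integral. -/
lemma rgg_integral_eq (lam r c : ℝ) (hlam : 0 < lam) (hr : 0 < r)
    (hc : c = Real.exp (lam * r) - Real.exp (-(lam * r))) (k m : ℕ) :
    ∫ x in Set.Ioi r,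
        (c * Real.exp (-(lam * x))) ^ k * (1 - c * Real.exp (-(lam * x))) ^ m *
          (lam * Real.exp (-(lam * x)))
      = (1/c) * ∫ t in (0:ℝ)..(c * Real.exp (-(lam * r))), t ^ k * (1 - t) ^ m := by
  have hcpos : 0 < c := by
    rw [hc, sub_pos]
    apply Real.exp_lt_exp.2
    nlinarith
  set a := c * Real.exp (-(lam * r)) with ha
  have ha_eq : a = 1 - Real.exp (-(2 * (lam * r))) := by
    rw [ha, hc]
    rw [sub_mul, ← Real.exp_add, ← Real.exp_add]
    ring_nf
    rw [Real.exp_zero]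
  have ha1 : a < 1 := by rw [ha_eq]; have := Real.exp_pos (-(2 * (lam * r))); linarith
  have ha0 : 0 < a := by
    rw [ha_eq]
    have : Real.exp (-(2 * (lam * r))) < 1 := by
      rw [Real.exp_lt_one_iff]; nlinarith
    linarith
  set g : ℝ → ℝ := fun t => t ^ k * (1 - t) ^ m with hg
  have hgc : Continuous g := by continuity
  set Φ : ℝ → ℝ := fun u => ∫ t in (0:ℝ)..u, g t with hΦ
  have hΦd : ∀ u : ℝ, HasDerivAt Φ (g u) u := by
    intro u
    exact intervalIntegral.integral_hasDerivAt_right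
      (hgc.intervalIntegrable _ _) (hgc.stronglyMeasurableAtFilter _ _) hgc.continuousAt
  set F : ℝ → ℝ := fun x => -(1/c) * Φ (c * Real.exp (-(lam * x))) with hF
  have hFd : ∀ x : ℝ, HasDerivAt F
      ((c * Real.exp (-(lam * x))) ^ k * (1 - c * Real.exp (-(lam * x))) ^ m *
        (lam * Real.exp (-(lam * x)))) x := by
    intro x
    have h1 : HasDerivAt (fun x : ℝ => c * Real.exp (-(lam * x)))
        (c * (Real.exp (-(lam * x)) * -lam)) x := by
      have : HasDerivAt (fun x : ℝ => -(lam * x)) (-lam) x := by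
        exact (((hasDerivAt_id x).const_mul lam).neg).congr_deriv (by simp)
      exact ((Real.hasDerivAt_exp _).comp x this).const_mul c
    have h2 := ((hΦd (c * Real.exp (-(lam * x)))).comp x h1).const_mul (-(1/c))
    refine h2.congr_deriv ?_
    simp only [hg]
    field_simp
  have hlim : Tendsto F atTop (𝓝 0) := by
    have h2 : Tendsto (fun x : ℝ => -(lam * x)) atTop atBot :=
      tendsto_neg_atTop_atBot.comp (Tendsto.const_mul_atTop hlam tendsto_id)
    have h1 : Tendsto (fun x : ℝ => c * Real.exp (-(lam * x))) atTop (𝓝 0) := by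
      simpa using (Real.tendsto_exp_atBot.comp h2).const_mul c
    have h3 := ((hΦd 0).continuousAt.tendsto).comp h1
    have hΦ0 : Φ 0 = 0 := intervalIntegral.integral_same
    simpa [hF, hΦ0] using h3.const_mul (-(1/c))
  have hnonneg : ∀ x ∈ Set.Ioi r,
      0 ≤ (c * Real.exp (-(lam * x))) ^ k * (1 - c * Real.exp (-(lam * x))) ^ m *
        (lam * Real.exp (-(lam * x))) := by
    intro x hx
    have hux : c * Real.exp (-(lam * x)) < 1 := by
      have : Real.exp (-(lam * x)) < Real.exp (-(lam * r)) := by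
        apply Real.exp_lt_exp.2
        have : r < x := hx
        nlinarith
      calc c * Real.exp (-(lam * x)) < c * Real.exp (-(lam * r)) := by
            exact (mul_lt_mul_iff_right₀ hcpos).2 this
        _ = a := rfl
        _ < 1 := ha1
    have h0 : 0 ≤ c * Real.exp (-(lam * x)) := by positivity
    have := Real.exp_pos (-(lam * x))
    have h1u : (0:ℝ) ≤ 1 - c * Real.exp (-(lam * x)) := by linarith
    exact mul_nonneg (mul_nonneg (pow_nonneg h0 _) (pow_nonneg h1u _)) (by positivity)
  have := integral_Ioi_of_hasDerivAt_of_nonneg' (g' := fun x =>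
      (c * Real.exp (-(lam * x))) ^ k * (1 - c * Real.exp (-(lam * x))) ^ m *
        (lam * Real.exp (-(lam * x)))) (fun x _ => hFd x) hnonneg hlim
  rw [this]
  have hΦ0 : Φ 0 = 0 := intervalIntegral.integral_same
  simp only [hF]
  rw [← ha]
  ring

/-- The expected number of degree-`k` nodes in the exponential RGG (ignoring nodes
in `[0,r)`) converges to `1/c` where `c = e^{λr} - e^{-λr}`, independently of `k`. -/
theorem expected_degree_count_tendsto
    (lam r : ℝ) (hlam : 0 < lam) (hr : 0 < r) (k : ℕ)
    (c : ℝ) (hc : c = Real.exp (lam * r) - Real.exp (-(lam * r))) :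
    Tendsto (fun n : ℕ =>
        (n : ℝ) * ((n - 1).choose k : ℝ) *
          ∫ x in Set.Ioi r,
            (c * Real.exp (-(lam * x))) ^ k *
              (1 - c * Real.exp (-(lam * x))) ^ (n - k - 1) *
              (lam * Real.exp (-(lam * x))))
      atTop (𝓝 (1 / c)) := by
  have hcpos : 0 < c := by
    rw [hc, sub_pos]; apply Real.exp_lt_exp.2; nlinarith
  set a := c * Real.exp (-(lam * r)) with ha
  have ha_eq : a = 1 - Real.exp (-(2 * (lam * r))) := by
    rw [ha, hc, sub_mul, ← Real.exp_add, ← Real.exp_add]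
    ring_nf
    rw [Real.exp_zero]
  have ha1 : a < 1 := by rw [ha_eq]; have := Real.exp_pos (-(2 * (lam * r))); linarith
  have ha0 : 0 < a := by
    rw [ha_eq]
    have : Real.exp (-(2 * (lam * r))) < 1 := by rw [Real.exp_lt_one_iff]; nlinarith
    linarith
  set q := 1 - a with hq
  have hq0 : 0 < q := by rw [hq]; linarith
  have hq1 : q < 1 := by rw [hq]; linarith
  set T : ℕ → ℝ := fun m => ∫ t in a..1, t ^ k * (1 - t) ^ m with hT
  have hsplit : ∀ m : ℕ, ∫ t in (0:ℝ)..a, t ^ k * (1 - t) ^ m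
      = (k.factorial * m.factorial : ℝ) / (k + m + 1).factorial - T m := by
    intro m
    have hcont : Continuous (fun t : ℝ => t ^ k * (1 - t) ^ m) := by continuity
    have := intervalIntegral.integral_add_adjacent_intervals (μ := volume) (a := (0:ℝ)) (b := a) (c := 1)
      (f := fun t => t ^ k * (1 - t) ^ m) (hcont.intervalIntegrable _ _)
      (hcont.intervalIntegrable _ _)
    rw [beta_nat_integral k m] at this
    simp only [hT]
    linarith
  -- nonnegativity and bound for the tail
  have hT0 : ∀ m : ℕ, 0 ≤ T m := by
    intro m
    simp only [hT]
    apply intervalIntegral.integral_nonneg (μ := volume) ha1.le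
    intro t ht
    have h1 : (0:ℝ) ≤ t := le_trans ha0.le ht.1
    have h2 : t ≤ 1 := ht.2
    have : (0:ℝ) ≤ 1 - t := by linarith
    positivity
  have hTle : ∀ m : ℕ, T m ≤ q ^ m := by
    intro m
    have hmono : T m ≤ ∫ _t in a..1, q ^ m := by
      simp only [hT]
      apply intervalIntegral.integral_mono_on ha1.le
      · exact (Continuous.intervalIntegrable (by continuity) _ _)
      · exact intervalIntegrable_const
      · intro t ht
        have h0 : a ≤ t := ht.1
        have h1 : (0:ℝ) ≤ t := le_trans ha0.le h0
        have h2 : t ≤ 1 := ht.2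
        have h3 : t ^ k ≤ 1 := pow_le_one₀ h1 h2
        have h4 : (1 - t) ^ m ≤ q ^ m := by
          apply pow_le_pow_left₀ (by linarith) (by rw [hq]; linarith)
        calc t ^ k * (1 - t) ^ m ≤ 1 * q ^ m := by
              apply mul_le_mul h3 h4 (pow_nonneg (by linarith) m) zero_le_one
          _ = q ^ m := one_mul _
    rw [intervalIntegral.integral_const, smul_eq_mul] at hmono
    calc T m ≤ (1 - a) * q ^ m := hmono
      _ ≤ 1 * q ^ m := by
          apply mul_le_mul_of_nonneg_right (by linarith) (by positivity)
      _ = q ^ m := one_mul _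
  -- the tail term tends to zero
  have htail : Tendsto (fun n : ℕ => (n : ℝ) * ((n - 1).choose k : ℝ) * T (n - k - 1))
      atTop (𝓝 0) := by
    have hbound : ∀ n : ℕ, (n : ℝ) * ((n - 1).choose k : ℝ) * T (n - k - 1)
        ≤ (n : ℝ) ^ (k + 1) * q ^ (n - k - 1) := by
      intro n
      have h1 : ((n - 1).choose k : ℝ) ≤ (n : ℝ) ^ k := by
        have := Nat.choose_le_pow (n - 1) k
        calc ((n - 1).choose k : ℝ) ≤ ((n - 1) ^ k : ℕ) := by exact_mod_cast this
          _ ≤ ((n ^ k : ℕ) : ℝ) := by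
              exact_mod_cast Nat.pow_le_pow_left (Nat.sub_le n 1) k
          _ = (n : ℝ) ^ k := by push_cast; ring
      calc (n : ℝ) * ((n - 1).choose k : ℝ) * T (n - k - 1)
          ≤ (n : ℝ) * (n : ℝ) ^ k * q ^ (n - k - 1) := by
            apply mul_le_mul _ (hTle _) (hT0 _) (by positivity)
            exact mul_le_mul_of_nonneg_left h1 (Nat.cast_nonneg n)
        _ = (n : ℝ) ^ (k + 1) * q ^ (n - k - 1) := by ring
    have hbound0 : ∀ n : ℕ, 0 ≤ (n : ℝ) * ((n - 1).choose k : ℝ) * T (n - k - 1) := by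
      intro n
      exact mul_nonneg (mul_nonneg (Nat.cast_nonneg _) (Nat.cast_nonneg _)) (hT0 _)
    have hgeo : Tendsto (fun n : ℕ => (n : ℝ) ^ (k + 1) * q ^ (n - k - 1)) atTop (𝓝 0) := by
      have h0 : Tendsto (fun n : ℕ => (n : ℝ) ^ (k + 1) * q ^ n) atTop (𝓝 0) := by
        have hs : Summable (fun n : ℕ => (n : ℝ) ^ (k + 1) * q ^ n) := by
          apply summable_pow_mul_geometric_of_norm_lt_one
          rw [Real.norm_eq_abs, abs_of_pos hq0]; exact hq1
        exact hs.tendsto_atTop_zero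
      have h1 := h0.div_const (q ^ (k + 1))
      rw [zero_div] at h1
      apply h1.congr'
      filter_upwards [eventually_ge_atTop (k + 1)] with n hn
      have : q ^ (n - k - 1) = q ^ n / q ^ (k + 1) := by
        rw [show n - k - 1 = n - (k + 1) by omega,
          pow_sub₀ q (ne_of_gt hq0) hn, div_eq_mul_inv]
      rw [this]
      ring
    exact tendsto_of_tendsto_of_tendsto_of_le_of_le tendsto_const_nhds hgeo hbound0 hbound
  -- the main term is eventually exactly (1/c) - (1/c) * tail
  have heq : ∀ᶠ n : ℕ in atTop,
      (n : ℝ) * ((n - 1).choose k : ℝ) *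
        ∫ x in Set.Ioi r,
          (c * Real.exp (-(lam * x))) ^ k *
            (1 - c * Real.exp (-(lam * x))) ^ (n - k - 1) *
            (lam * Real.exp (-(lam * x)))
      = 1 / c - (1 / c) * ((n : ℝ) * ((n - 1).choose k : ℝ) * T (n - k - 1)) := by
    filter_upwards [eventually_ge_atTop (k + 1)] with n hn
    rw [rgg_integral_eq lam r c hlam hr hc k (n - k - 1), ← ha, hsplit (n - k - 1)]
    have hfac : (n : ℝ) * ((n - 1).choose k : ℝ) *
        ((k.factorial * (n - k - 1).factorial : ℝ) / (k + (n - k - 1) + 1).factorial) = 1 := by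
      have he1 : k + (n - k - 1) + 1 = n := by omega
      have he2 : n - k - 1 = (n - 1) - k := by omega
      have hk1 : k ≤ n - 1 := by omega
      have hnat : (n - 1).choose k * k.factorial * ((n - 1) - k).factorial
          = (n - 1).factorial := Nat.choose_mul_factorial_mul_factorial hk1
      have hnat2 : n * ((n - 1).choose k * (k.factorial * (n - k - 1).factorial))
          = n.factorial := by
        rw [he2, show (n - 1).choose k * (k.factorial * ((n-1) - k).factorial)
          = (n - 1).choose k * k.factorial * ((n-1) - k).factorial by ring, hnat]
        rw [← Nat.succ_pred_eq_of_pos (show 0 < n by omega), Nat.factorial_succ]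
        simp [Nat.succ_pred_eq_of_pos (show 0 < n by omega)]
      rw [he1]
      have hfn : ((n.factorial : ℝ)) ≠ 0 := by positivity
      rw [← mul_div_assoc, div_eq_one_iff_eq hfn, mul_assoc]
      exact_mod_cast hnat2
    linear_combination (1/c) * hfac
  refine Tendsto.congr' (Filter.EventuallyEq.symm heq) ?_
  have h2 : Tendsto (fun n : ℕ => 1/c - 1/c * ((n:ℝ) * ((n - 1).choose k : ℝ) * T (n - k - 1)))
      atTop (𝓝 (1/c - 1/c * 0)) :=
    Tendsto.sub tendsto_const_nhds (htail.const_mul (1/c))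
  simpa using h2
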